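/- For nonnegative integers s ≤ n, sum_{k=s}^{n-1} (2k+1)*binom(k,s)*binom(k+s,s) = n*binom(n+s,2s)*binom(2s,s)*(n-s)/(s+1). -/

import Mathlib

open Finset

lemma trinom (s n : ℕ) (h : s ≤ n) :
    ((n + s).choose (2 * s) : ℚ) * ((2 * s).choose s : ℚ) =
      ((n + s).choose s : ℚ) * (n.choose s : ℚ) := by
  have := Nat.choose_mul (n := n + s) (k := 2 * s) (s := s) (by omega)
  have h2 : n + s - s = n := by omega
  have h3 : 2 * s - s = s := by omega
  rw [h2, h3] at this
  exact_mod_cast congrArg (Nat.cast : ℕ → ℚ) this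

theorem stmt_18 (s n : ℕ) (h : s ≤ n) :
    ∑ k ∈ Finset.Ico s n,
        (2 * (k : ℚ) + 1) * (Nat.choose k s : ℚ) * (Nat.choose (k + s) s : ℚ) =
      (n : ℚ) * (Nat.choose (n + s) (2 * s) : ℚ) * (Nat.choose (2 * s) s : ℚ) *
        ((n : ℚ) - (s : ℚ)) / ((s : ℚ) + 1) := by
  induction n, h using Nat.le_induction with
  | base => simp
  | succ n hn ih =>
    rw [Finset.sum_Ico_succ_top hn, ih]
    have hs1 : ((s : ℚ) + 1) ≠ 0 := by positivity
    have t1 := trinom s n hn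
    have t2 := trinom s (n + 1) (by omega)
    have h1 : ((n : ℚ) + 1 - s) * ((n + 1).choose s : ℚ) = ((n : ℚ) + 1) * (n.choose s : ℚ) := by
      have := Nat.choose_mul_succ_eq n s
      have hc : ((n.choose s : ℚ)) * (n + 1) = ((n + 1).choose s : ℚ) * ((n + 1 - s : ℕ) : ℚ) := by
        exact_mod_cast congrArg (Nat.cast : ℕ → ℚ) this
      have he : ((n + 1 - s : ℕ) : ℚ) = (n : ℚ) + 1 - s := by
        push_cast [Nat.cast_sub (by omega : s ≤ n + 1)]; ring
      rw [he] at hc; linarith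
    have h2 : ((n : ℚ) + 1) * ((n + 1 + s).choose s : ℚ)
        = ((n : ℚ) + s + 1) * ((n + s).choose s : ℚ) := by
      have := Nat.choose_mul_succ_eq (n + s) s
      have hc : (((n + s).choose s : ℚ)) * ((n : ℚ) + s + 1)
          = ((n + s + 1).choose s : ℚ) * ((n + s + 1 - s : ℕ) : ℚ) := by
        exact_mod_cast congrArg (Nat.cast : ℕ → ℚ) this
      have he : ((n + s + 1 - s : ℕ) : ℚ) = (n : ℚ) + 1 := by
        push_cast [show n + s + 1 - s = n + 1 by omega]; ring
      have he2 : n + 1 + s = n + s + 1 := by omega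
      rw [he] at hc; rw [he2]; linarith
    have h4 : ((n : ℚ) + 1 - s) * (((n + 1).choose s : ℚ) * ((n + 1 + s).choose s : ℚ))
        = ((n : ℚ) + s + 1) * ((n.choose s : ℚ) * ((n + s).choose s : ℚ)) := by
      have hne : ((n : ℚ) + 1) ≠ 0 := by positivity
      apply mul_left_cancel₀ hne
      calc ((n : ℚ) + 1) * (((n : ℚ) + 1 - s) * (((n + 1).choose s : ℚ) * ((n + 1 + s).choose s : ℚ)))
          = (((n : ℚ) + 1 - s) * ((n + 1).choose s : ℚ)) * (((n : ℚ) + 1) * ((n + 1 + s).choose s : ℚ)) := by ring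
        _ = (((n : ℚ) + 1) * (n.choose s : ℚ)) * (((n : ℚ) + s + 1) * ((n + s).choose s : ℚ)) := by rw [h1, h2]
        _ = ((n : ℚ) + 1) * (((n : ℚ) + s + 1) * ((n.choose s : ℚ) * ((n + s).choose s : ℚ))) := by ring
    field_simp
    push_cast
    linear_combination ((n : ℚ) * ((n : ℚ) - s)) * t1
      - (((n : ℚ) + 1) * ((n : ℚ) + 1 - s)) * t2 - ((n : ℚ) + 1) * h4
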